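/- Let p be a prime, n ≥ 1, and set d = n². Let μ be the Haar probability measure on the compact group GLₙ(ℤ_p). For each integer m ≥ 0 let c_m = cc(GLₙ(ℤ/p^mℤ)) be the number of conjugacy classes of GLₙ(ℤ/p^mℤ), and for real σ > 0 define Z(σ) = ∫_{GLₙ(ℤ_p) × GLₙ(ℤ_p)} ( max_{1≤i,j≤n} ‖(xy − yx)_{ij}‖_p )^σ d(μ×μ)(x,y), where the convention 0^σ = 0 is used. Then for every real s > d the series ∑_{m=0}^∞ c_m p^{−ms} converges and ∑_{m=0}^∞ c_m p^{−ms} − 1 = k·(Z(s−d) − 1)/(1 − p^{s−d}), where k = |GLₙ(𝔽_p)| / p^d. -/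

import Mathlib

open MeasureTheory
noncomputable instance (p : ℕ) [Fact p.Prime] : MeasurableSpace (PadicInt p) := borel _
instance (p : ℕ) [Fact p.Prime] : BorelSpace (PadicInt p) := ⟨rfl⟩
instance {l m α : Type*} [MeasurableSpace α] : MeasurableSpace (Matrix l m α) :=
  (inferInstance : MeasurableSpace (l → m → α))

namespace GLZeta

open ENNReal NNReal

instance {l m : Type*} (p : ℕ) [Fact p.Prime] [Countable l] [Countable m] :
    BorelSpace (Matrix l m (PadicInt p)) :=
  (inferInstance : BorelSpace (l → m → (PadicInt p)))

instance {l m : Type*} (p : ℕ) [Fact p.Prime] [Countable l] [Countable m] :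
    SecondCountableTopology (Matrix l m (PadicInt p)) :=
  (inferInstance : SecondCountableTopology (l → m → (PadicInt p)))

/-- measurability into `Mˣ` from measurability of the value. -/
lemma measurable_units {α M : Type*} [MeasurableSpace α] [MeasurableSpace M] [Monoid M]
    {f : α → Mˣ} (h : Measurable fun a => (f a : M)) : Measurable f := by
  rw [measurable_iff_comap_le]
  show MeasurableSpace.comap f (MeasurableSpace.comap _ _) ≤ _
  rw [MeasurableSpace.comap_comp]
  exact measurable_iff_comap_le.mp h

variable {n : ℕ}

/-- surjectivity of the induced map on `GL` -/
lemma GL_map_surjective {R S : Type*} [CommRing R] [CommRing S] (f : R →+* S)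
    (hf : Function.Surjective f) (hu : ∀ x : R, IsUnit (f x) → IsUnit x) :
    Function.Surjective (Matrix.GeneralLinearGroup.map (n := Fin n) f) := by
  intro g
  have hA : ∀ i j, ∃ x : R, f x = (g : Matrix (Fin n) (Fin n) S) i j := fun i j => hf _
  choose A hA using hA
  have hmap : (Matrix.of A).map f = (g : Matrix (Fin n) (Fin n) S) := by
    ext i j; exact hA i j
  have hdet : IsUnit ((Matrix.of A).det) := by
    apply hu
    rw [RingHom.map_det, RingHom.mapMatrix_apply, hmap]
    exact (Matrix.isUnit_iff_isUnit_det _).mp g.isUnit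
  refine ⟨Matrix.GeneralLinearGroup.mk'' (Matrix.of A) hdet, ?_⟩
  apply Units.ext
  show ((Matrix.GeneralLinearGroup.mk'' (Matrix.of A) hdet :
      Matrix (Fin n) (Fin n) R)).map f = _
  have : ((Matrix.GeneralLinearGroup.mk'' (Matrix.of A) hdet) :
      Matrix (Fin n) (Fin n) R) = Matrix.of A := rfl
  rw [this, hmap]

variable (p : ℕ) [Fact p.Prime]

lemma isUnit_of_toZModPow {m : ℕ} (hm : m ≠ 0) (x : PadicInt p)
    (h : IsUnit (PadicInt.toZModPow m x)) : IsUnit x := by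
  by_contra hx
  rw [PadicInt.not_isUnit_iff, PadicInt.norm_lt_one_iff_dvd] at hx
  obtain ⟨y, rfl⟩ := hx
  rw [map_mul, map_natCast] at h
  have hp : IsUnit ((p : ℕ) : ZMod (p ^ m)) := isUnit_of_mul_isUnit_left h
  rw [ZMod.isUnit_iff_coprime, (Fact.out : p.Prime).coprime_iff_not_dvd] at hp
  exact hp (dvd_pow_self p hm)

lemma isUnit_of_castHom {m : ℕ} (hm : m ≠ 0) (x : ZMod (p ^ m))
    (h : IsUnit (ZMod.castHom (dvd_pow_self p hm) (ZMod p) x)) : IsUnit x := by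
  haveI : NeZero (p ^ m) := ⟨pow_ne_zero _ (Fact.out : p.Prime).ne_zero⟩
  have hcast : (ZMod.castHom (dvd_pow_self p hm) (ZMod p)) x = ((x.val : ℕ) : ZMod p) := by
    rw [ZMod.castHom_apply, ← ZMod.natCast_val]
  rw [hcast, ZMod.isUnit_iff_coprime, Nat.coprime_comm,
    (Fact.out : p.Prime).coprime_iff_not_dvd] at h
  have hx : x = ((x.val : ℕ) : ZMod (p ^ m)) := (ZMod.natCast_zmod_val x).symm
  rw [hx, ZMod.isUnit_iff_coprime, Nat.coprime_pow_right_iff (Nat.pos_of_ne_zero hm),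
    Nat.coprime_comm, (Fact.out : p.Prime).coprime_iff_not_dvd]
  exact h

lemma castHom_surj {m : ℕ} (hm : m ≠ 0) :
    Function.Surjective (ZMod.castHom (dvd_pow_self p hm) (ZMod p)) := by
  intro y
  exact ⟨((y.val : ℕ) : ZMod (p ^ m)), by rw [map_natCast, ZMod.natCast_zmod_val]⟩

lemma card_ker_castHom {m : ℕ} (hm : m ≠ 0) :
    Nat.card {x : ZMod (p ^ m) // ZMod.castHom (dvd_pow_self p hm) (ZMod p) x = 0} = p ^ (m - 1) := by
  set f := (ZMod.castHom (dvd_pow_self p hm) (ZMod p)).toAddMonoidHom with hf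
  have h1 : Nat.card (ZMod (p ^ m)) = Nat.card (ZMod p) * Nat.card f.ker := by
    rw [AddSubgroup.card_eq_card_quotient_mul_card_addSubgroup f.ker]
    congr 1
    exact Nat.card_congr (QuotientAddGroup.quotientKerEquivOfSurjective f (castHom_surj p hm)).toEquiv
  rw [Nat.card_zmod, Nat.card_zmod] at h1
  have h2 : Nat.card {x : ZMod (p ^ m) // ZMod.castHom (dvd_pow_self p hm) (ZMod p) x = 0}
      = Nat.card f.ker := by
    apply Nat.card_congr
    exact Equiv.subtypeEquivRight (fun x => by simp [f, AddMonoidHom.mem_ker])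
  have hp : p ≠ 0 := (Fact.out : p.Prime).ne_zero
  have hpow : p ^ m = p * p ^ (m - 1) := by
    conv_lhs => rw [← Nat.sub_add_cancel (Nat.one_le_iff_ne_zero.2 hm)]
    rw [pow_succ, mul_comm]
  rw [h2]
  exact (Nat.eq_of_mul_eq_mul_left (Nat.pos_of_ne_zero hp) (hpow.symm.trans h1)).symm

lemma map_one_entry {m : ℕ} (hm : m ≠ 0) (i j : Fin n) :
    ZMod.castHom (dvd_pow_self p hm) (ZMod p) ((1 : Matrix (Fin n) (Fin n) (ZMod (p ^ m))) i j)
      = (1 : Matrix (Fin n) (Fin n) (ZMod p)) i j := by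
  rw [Matrix.one_apply, Matrix.one_apply]
  split_ifs
  · exact map_one _
  · exact map_zero _

lemma card_GL_zmod {m : ℕ} (hm : m ≠ 0) (n : ℕ) :
    Nat.card (GL (Fin n) (ZMod (p ^ m)))
      = Nat.card (GL (Fin n) (ZMod p)) * p ^ ((m - 1) * n ^ 2) := by
  classical
  set f := ZMod.castHom (dvd_pow_self p hm) (ZMod p) with hfdef
  set ψ := Matrix.GeneralLinearGroup.map (n := Fin n) f with hψdef
  have hsurj : Function.Surjective ψ :=
    GL_map_surjective f (castHom_surj p hm) (isUnit_of_castHom p hm)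
  have h1 : Nat.card (GL (Fin n) (ZMod (p ^ m)))
      = Nat.card (GL (Fin n) (ZMod p)) * Nat.card ψ.ker := by
    rw [Subgroup.card_eq_card_quotient_mul_card_subgroup ψ.ker]
    congr 1
    exact Nat.card_congr (QuotientGroup.quotientKerEquivOfSurjective ψ hsurj).toEquiv
  have key : ∀ u : GL (Fin n) (ZMod (p ^ m)), u ∈ ψ.ker ↔
      (u : Matrix (Fin n) (Fin n) (ZMod (p ^ m))).map f = 1 := by
    intro u
    rw [MonoidHom.mem_ker, Units.ext_iff]
    rfl
  have e : ψ.ker ≃ (Fin n → Fin n → {x : ZMod (p ^ m) // f x = 0}) := by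
    refine Equiv.ofBijective (fun u i j => ⟨(u.1 : Matrix (Fin n) (Fin n) (ZMod (p ^ m))) i j
      - (1 : Matrix (Fin n) (Fin n) (ZMod (p ^ m))) i j, ?_⟩) ⟨?_, ?_⟩
    · have h := (key u.1).mp u.2
      rw [map_sub]
      have : f ((u.1 : Matrix (Fin n) (Fin n) (ZMod (p ^ m))) i j)
          = (1 : Matrix (Fin n) (Fin n) (ZMod p)) i j := by
        rw [← h]; rfl
      rw [this, map_one_entry p hm i j, sub_self]
    · intro u v huv
      have h : ∀ i j, (u.1 : Matrix (Fin n) (Fin n) (ZMod (p ^ m))) i j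
          = (v.1 : Matrix (Fin n) (Fin n) (ZMod (p ^ m))) i j := by
        intro i j
        have h1 := congrArg Subtype.val (congrFun (congrFun huv i) j)
        exact sub_left_inj.mp h1
      apply Subtype.ext
      apply Units.ext
      exact Matrix.ext h
    · intro B
      set M : Matrix (Fin n) (Fin n) (ZMod (p ^ m)) :=
        1 + Matrix.of (fun i j => (B i j).1) with hM
      have hmap : M.map f = 1 := by
        ext i j
        rw [Matrix.map_apply, hM]
        show f ((1 : Matrix (Fin n) (Fin n) (ZMod (p ^ m))) i j + (B i j).1) = _
        rw [map_add, (B i j).2, add_zero, map_one_entry p hm i j]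
      have hfdet : f M.det = 1 := by
        rw [RingHom.map_det, RingHom.mapMatrix_apply, hmap, Matrix.det_one]
      have hdet : IsUnit M.det := by
        apply isUnit_of_castHom p hm
        rw [← hfdef, hfdet]
        exact isUnit_one
      set u : GL (Fin n) (ZMod (p ^ m)) := Matrix.GeneralLinearGroup.mk'' M hdet with hu
      have huval : (u : Matrix (Fin n) (Fin n) (ZMod (p ^ m))) = M := rfl
      have humem : u ∈ ψ.ker := by
        rw [key u, huval, hmap]
      refine ⟨⟨u, humem⟩, ?_⟩
      funext i j
      apply Subtype.ext
      show (u : Matrix (Fin n) (Fin n) (ZMod (p ^ m))) i j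
        - (1 : Matrix (Fin n) (Fin n) (ZMod (p ^ m))) i j = (B i j).1
      rw [huval, hM]
      show (1 : Matrix (Fin n) (Fin n) (ZMod (p ^ m))) i j + (B i j).1
        - (1 : Matrix (Fin n) (Fin n) (ZMod (p ^ m))) i j = (B i j).1
      ring
  have h2 : Nat.card ψ.ker = p ^ ((m - 1) * n ^ 2) := by
    rw [Nat.card_congr e, Nat.card_fun, Nat.card_fun, Nat.card_eq_fintype_card (α := Fin n),
      Fintype.card_fin, card_ker_castHom p hm, ← pow_mul, ← pow_mul]
    ring_nf
  rw [h1, h2]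

section Measure

variable {p : ℕ} [Fact p.Prime] {n : ℕ}

/-- reduction mod `p^m` on `GL_n(ℤ_p)`. -/
noncomputable def phi (m : ℕ) : Matrix.GeneralLinearGroup (Fin n) (PadicInt p) →*
    Matrix.GeneralLinearGroup (Fin n) (ZMod (p ^ m)) :=
  Matrix.GeneralLinearGroup.map (PadicInt.toZModPow m)

lemma toZModPow_surj (m : ℕ) : Function.Surjective (PadicInt.toZModPow (p := p) m) := by
  intro y
  haveI : NeZero (p ^ m) := ⟨pow_ne_zero _ (Fact.out : p.Prime).ne_zero⟩
  exact ⟨((y.val : ℕ) : PadicInt p), by rw [map_natCast, ZMod.natCast_zmod_val]⟩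

lemma phi_surj {m : ℕ} (hm : m ≠ 0) : Function.Surjective (phi (p := p) (n := n) m) :=
  GL_map_surjective _ (toZModPow_surj m) (fun x => isUnit_of_toZModPow p hm x)

lemma toZModPow_eq_zero_iff (m : ℕ) (z : PadicInt p) :
    PadicInt.toZModPow m z = 0 ↔ ‖z‖ ≤ (p : ℝ) ^ (-(m : ℤ)) := by
  rw [← RingHom.mem_ker, PadicInt.ker_toZModPow, ← PadicInt.norm_le_pow_iff_mem_span_pow]

lemma measurable_val_GL : Measurable (fun g : Matrix.GeneralLinearGroup (Fin n) (PadicInt p) =>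
    (g : Matrix (Fin n) (Fin n) (PadicInt p))) := fun s hs => ⟨s, hs, rfl⟩

lemma measurable_mul_left (x : Matrix.GeneralLinearGroup (Fin n) (PadicInt p)) :
    Measurable (fun g : Matrix.GeneralLinearGroup (Fin n) (PadicInt p) => x * g) := by
  apply measurable_units
  have hc : Continuous (fun A : Matrix (Fin n) (Fin n) (PadicInt p) =>
      (x : Matrix (Fin n) (Fin n) (PadicInt p)) * A) :=
    Continuous.matrix_mul continuous_const continuous_id
  exact hc.measurable.comp measurable_val_GL

lemma phi_eq_iff (m : ℕ) (g h : Matrix.GeneralLinearGroup (Fin n) (PadicInt p)) :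
    phi m g = phi m h ↔ ∀ i j, ‖(g : Matrix (Fin n) (Fin n) (PadicInt p)) i j -
      (h : Matrix (Fin n) (Fin n) (PadicInt p)) i j‖ ≤ (p : ℝ) ^ (-(m : ℤ)) := by
  rw [Units.ext_iff]
  have hval : ∀ u : Matrix.GeneralLinearGroup (Fin n) (PadicInt p),
      ((phi m u : Matrix.GeneralLinearGroup (Fin n) (ZMod (p ^ m)))
        : Matrix (Fin n) (Fin n) (ZMod (p ^ m)))
      = (u : Matrix (Fin n) (Fin n) (PadicInt p)).map (PadicInt.toZModPow m) := fun u => rfl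
  rw [hval, hval, ← Matrix.ext_iff]
  constructor
  · intro H i j
    rw [← toZModPow_eq_zero_iff, map_sub, sub_eq_zero]
    exact H i j
  · intro H i j
    have := H i j
    rw [← toZModPow_eq_zero_iff, map_sub, sub_eq_zero] at this
    exact this

lemma fiber_measurable {m : ℕ} (hm : m ≠ 0) (a : Matrix.GeneralLinearGroup (Fin n) (ZMod (p ^ m))) :
    MeasurableSet (⇑(phi (p := p) (n := n) m) ⁻¹' {a}) := by
  obtain ⟨x₀, hx₀⟩ := phi_surj (n := n) hm a
  have heq : ⇑(phi (p := p) (n := n) m) ⁻¹' {a} =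
      (fun g : Matrix.GeneralLinearGroup (Fin n) (PadicInt p) =>
        (g : Matrix (Fin n) (Fin n) (PadicInt p))) ⁻¹'
      {A : Matrix (Fin n) (Fin n) (PadicInt p) | ∀ i j,
        ‖A i j - (x₀ : Matrix (Fin n) (Fin n) (PadicInt p)) i j‖ ≤ (p : ℝ) ^ (-(m : ℤ))} := by
    ext g
    simp only [Set.mem_preimage, Set.mem_singleton_iff, Set.mem_setOf_eq, ← hx₀]
    exact phi_eq_iff m g x₀
  rw [heq]
  apply measurable_val_GL
  apply IsClosed.measurableSet
  have : {A : Matrix (Fin n) (Fin n) (PadicInt p) | ∀ i j,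
      ‖A i j - (x₀ : Matrix (Fin n) (Fin n) (PadicInt p)) i j‖ ≤ (p : ℝ) ^ (-(m : ℤ))}
      = ⋂ i, ⋂ j, {A : Matrix (Fin n) (Fin n) (PadicInt p) |
        ‖A i j - (x₀ : Matrix (Fin n) (Fin n) (PadicInt p)) i j‖ ≤ (p : ℝ) ^ (-(m : ℤ))} := by
    ext A; simp [Set.mem_iInter, Set.mem_setOf_eq]
  rw [this]
  apply isClosed_iInter
  intro i
  apply isClosed_iInter
  intro j
  apply isClosed_le _ continuous_const
  apply Continuous.norm
  apply Continuous.sub _ continuous_const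
  exact (continuous_apply j).comp (continuous_apply i)

lemma fiber_measure {m : ℕ} (hm : m ≠ 0)
    (μ : Measure (Matrix.GeneralLinearGroup (Fin n) (PadicInt p)))
    [μ.IsMulLeftInvariant] [MeasureTheory.IsProbabilityMeasure μ]
    (a : Matrix.GeneralLinearGroup (Fin n) (ZMod (p ^ m))) :
    μ (⇑(phi (p := p) (n := n) m) ⁻¹' {a})
      = ((Nat.card (Matrix.GeneralLinearGroup (Fin n) (ZMod (p ^ m))) : ℝ≥0∞))⁻¹ := by
  classical
  haveI : NeZero (p ^ m) := ⟨pow_ne_zero _ (Fact.out : p.Prime).ne_zero⟩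
  have htrans : ∀ b : Matrix.GeneralLinearGroup (Fin n) (ZMod (p ^ m)),
      μ (⇑(phi (p := p) (n := n) m) ⁻¹' {b}) = μ (⇑(phi (p := p) (n := n) m) ⁻¹' {1}) := by
    intro b
    obtain ⟨x₀, hx₀⟩ := phi_surj (n := n) hm b
    have hpre : (fun g => x₀ * g) ⁻¹' (⇑(phi (p := p) (n := n) m) ⁻¹' {b})
        = ⇑(phi (p := p) (n := n) m) ⁻¹' {1} := by
      ext g
      simp only [Set.mem_preimage, Set.mem_singleton_iff]
      rw [MonoidHom.map_mul (phi (p := p) (n := n) m) x₀ g, hx₀]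
      constructor
      · intro h
        have := congrArg (fun z => b⁻¹ * z) h
        simpa [← mul_assoc] using this
      · intro h; rw [h, mul_one]
    calc μ (⇑(phi (p := p) (n := n) m) ⁻¹' {b})
        = (Measure.map (fun g => x₀ * g) μ) (⇑(phi (p := p) (n := n) m) ⁻¹' {b}) := by
          rw [MeasureTheory.map_mul_left_eq_self μ x₀]
      _ = μ ((fun g => x₀ * g) ⁻¹' (⇑(phi (p := p) (n := n) m) ⁻¹' {b})) :=
          MeasureTheory.Measure.map_apply (measurable_mul_left x₀) (fiber_measurable hm b)
      _ = μ (⇑(phi (p := p) (n := n) m) ⁻¹' {1}) := by rw [hpre]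
  have hcover : (⋃ b : Matrix.GeneralLinearGroup (Fin n) (ZMod (p ^ m)),
      ⇑(phi (p := p) (n := n) m) ⁻¹' {b}) = Set.univ := by
    ext g; simp
  have hdisj : Pairwise (Function.onFun Disjoint
      (fun b : Matrix.GeneralLinearGroup (Fin n) (ZMod (p ^ m)) =>
        ⇑(phi (p := p) (n := n) m) ⁻¹' {b})) := by
    intro b b' hbb'
    apply Set.disjoint_left.mpr
    intro g hg hg'
    exact hbb' (by simp only [Set.mem_preimage, Set.mem_singleton_iff] at hg hg'; rw [← hg, ← hg'])
  have hsum := MeasureTheory.measure_iUnion hdisj (fun b => fiber_measurable hm b) (μ := μ)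
  rw [hcover, MeasureTheory.measure_univ] at hsum
  have hfin : ∑' b : Matrix.GeneralLinearGroup (Fin n) (ZMod (p ^ m)),
      μ (⇑(phi (p := p) (n := n) m) ⁻¹' {b})
      = (Nat.card (Matrix.GeneralLinearGroup (Fin n) (ZMod (p ^ m))) : ℝ≥0∞)
        * μ (⇑(phi (p := p) (n := n) m) ⁻¹' {1}) := by
    rw [tsum_eq_sum (s := Finset.univ) (by simp)]
    rw [Finset.sum_congr rfl (fun b _ => htrans b), Finset.sum_const, nsmul_eq_mul]
    congr 2
    rw [Nat.card_eq_fintype_card]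
    simp
  rw [hfin] at hsum
  have h0 : ((Nat.card (Matrix.GeneralLinearGroup (Fin n) (ZMod (p ^ m))) : ℝ≥0∞)) ≠ 0 := by
    simp [Nat.card_eq_fintype_card, Fintype.card_ne_zero]
  have htop : ((Nat.card (Matrix.GeneralLinearGroup (Fin n) (ZMod (p ^ m))) : ℝ≥0∞)) ≠ ⊤ :=
    ENNReal.natCast_ne_top _
  rw [htrans a]
  calc μ (⇑(phi (p := p) (n := n) m) ⁻¹' {1})
      = ((Nat.card (Matrix.GeneralLinearGroup (Fin n) (ZMod (p ^ m))) : ℝ≥0∞))⁻¹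
        * (((Nat.card (Matrix.GeneralLinearGroup (Fin n) (ZMod (p ^ m))) : ℝ≥0∞))
          * μ (⇑(phi (p := p) (n := n) m) ⁻¹' {1})) := by
        rw [← mul_assoc, ENNReal.inv_mul_cancel h0 htop, one_mul]
    _ = ((Nat.card (Matrix.GeneralLinearGroup (Fin n) (ZMod (p ^ m))) : ℝ≥0∞))⁻¹ := by
        rw [← hsum, mul_one]

/-- the set of pairs whose commutator is ≡ 0 mod `p^m`. -/
def Sset (p : ℕ) [Fact p.Prime] (n m : ℕ) :
    Set (Matrix.GeneralLinearGroup (Fin n) (PadicInt p) ×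
      Matrix.GeneralLinearGroup (Fin n) (PadicInt p)) :=
  {w | ∀ i j, ‖((w.1 : Matrix (Fin n) (Fin n) (PadicInt p)) *
      (w.2 : Matrix (Fin n) (Fin n) (PadicInt p)) -
      (w.2 : Matrix (Fin n) (Fin n) (PadicInt p)) *
      (w.1 : Matrix (Fin n) (Fin n) (PadicInt p))) i j‖ ≤ (p : ℝ) ^ (-(m : ℤ))}

lemma mem_Sset_iff (m : ℕ) (w : Matrix.GeneralLinearGroup (Fin n) (PadicInt p) ×
      Matrix.GeneralLinearGroup (Fin n) (PadicInt p)) :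
    w ∈ Sset p n m ↔ phi m w.1 * phi m w.2 = phi m w.2 * phi m w.1 := by
  have hval : ∀ u : Matrix.GeneralLinearGroup (Fin n) (PadicInt p),
      ((phi m u : Matrix.GeneralLinearGroup (Fin n) (ZMod (p ^ m)))
        : Matrix (Fin n) (Fin n) (ZMod (p ^ m)))
      = (PadicInt.toZModPow m).mapMatrix (u : Matrix (Fin n) (Fin n) (PadicInt p)) := fun u => rfl
  rw [Units.ext_iff, Units.val_mul, Units.val_mul, hval, hval, ← map_mul, ← map_mul,
    ← sub_eq_zero, ← map_sub]
  constructor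
  · intro H
    have : ∀ i j, (PadicInt.toZModPow (p := p) m)
        (((w.1 : Matrix (Fin n) (Fin n) (PadicInt p)) *
          (w.2 : Matrix (Fin n) (Fin n) (PadicInt p)) -
          (w.2 : Matrix (Fin n) (Fin n) (PadicInt p)) *
          (w.1 : Matrix (Fin n) (Fin n) (PadicInt p))) i j) = 0 := by
      intro i j
      rw [toZModPow_eq_zero_iff]
      exact H i j
    ext i j
    rw [RingHom.mapMatrix_apply, Matrix.map_apply]
    exact this i j
  · intro H i j
    rw [← toZModPow_eq_zero_iff]
    have := congrFun (congrFun (congrArg (fun (X : Matrix (Fin n) (Fin n) (ZMod (p ^ m)))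
      => (X : Fin n → Fin n → ZMod (p ^ m))) H) i) j
    exact this

lemma Sset_measurable (m : ℕ) : MeasurableSet (Sset p n m) := by
  have hcont : Continuous (fun A : Matrix (Fin n) (Fin n) (PadicInt p) ×
      Matrix (Fin n) (Fin n) (PadicInt p) => A.1 * A.2 - A.2 * A.1) :=
    (Continuous.matrix_mul continuous_fst continuous_snd).sub
      (Continuous.matrix_mul continuous_snd continuous_fst)
  have hmeas : Measurable (fun w : Matrix.GeneralLinearGroup (Fin n) (PadicInt p) ×
      Matrix.GeneralLinearGroup (Fin n) (PadicInt p) =>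
      ((w.1 : Matrix (Fin n) (Fin n) (PadicInt p)), (w.2 : Matrix (Fin n) (Fin n) (PadicInt p)))) :=
    (measurable_val_GL.comp measurable_fst).prodMk (measurable_val_GL.comp measurable_snd)
  have : Sset p n m = (fun w : Matrix.GeneralLinearGroup (Fin n) (PadicInt p) ×
      Matrix.GeneralLinearGroup (Fin n) (PadicInt p) =>
      ((w.1 : Matrix (Fin n) (Fin n) (PadicInt p)), (w.2 : Matrix (Fin n) (Fin n) (PadicInt p))))
      ⁻¹' ((fun A : Matrix (Fin n) (Fin n) (PadicInt p) × Matrix (Fin n) (Fin n) (PadicInt p) =>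
        A.1 * A.2 - A.2 * A.1) ⁻¹'
        (⋂ i, ⋂ j, {B : Matrix (Fin n) (Fin n) (PadicInt p) |
          ‖B i j‖ ≤ (p : ℝ) ^ (-(m : ℤ))})) := by
    ext w
    simp only [Sset, Set.mem_preimage, Set.mem_iInter, Set.mem_setOf_eq]
  rw [this]
  apply hmeas
  apply hcont.measurable
  apply MeasurableSet.iInter; intro i
  apply MeasurableSet.iInter; intro j
  apply IsClosed.measurableSet
  apply isClosed_le _ continuous_const
  exact ((continuous_apply j).comp (continuous_apply i)).norm

lemma Sset_antitone {k m : ℕ} (hkm : k ≤ m) : Sset p n m ⊆ Sset p n k := by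
  intro w hw i j
  refine le_trans (hw i j) ?_
  apply zpow_le_zpow_right₀
  · exact_mod_cast (Fact.out : p.Prime).one_lt.le
  · omega

lemma Sset_zero : Sset p n 0 = Set.univ := by
  ext w
  simp only [Sset, Set.mem_setOf_eq, Set.mem_univ, iff_true]
  intro i j
  simpa using PadicInt.norm_le_one _

lemma Sset_measure {m : ℕ} (hm : m ≠ 0)
    (μ : Measure (Matrix.GeneralLinearGroup (Fin n) (PadicInt p)))
    [μ.IsMulLeftInvariant] [MeasureTheory.IsProbabilityMeasure μ] :
    (μ.prod μ) (Sset p n m)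
      = (Nat.card {q : Matrix.GeneralLinearGroup (Fin n) (ZMod (p ^ m)) ×
            Matrix.GeneralLinearGroup (Fin n) (ZMod (p ^ m)) // Commute q.1 q.2} : ℝ≥0∞)
        * (((Nat.card (Matrix.GeneralLinearGroup (Fin n) (ZMod (p ^ m))) : ℝ≥0∞))⁻¹) ^ 2 := by
  classical
  haveI : NeZero (p ^ m) := ⟨pow_ne_zero _ (Fact.out : p.Prime).ne_zero⟩
  set Cs : Finset (Matrix.GeneralLinearGroup (Fin n) (ZMod (p ^ m)) ×
      Matrix.GeneralLinearGroup (Fin n) (ZMod (p ^ m))) :=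
    Finset.univ.filter (fun q => q.1 * q.2 = q.2 * q.1) with hCs
  have hS : Sset p n m = ⋃ q ∈ Cs, ((⇑(phi (p := p) (n := n) m) ⁻¹' {q.1}) ×ˢ
      (⇑(phi (p := p) (n := n) m) ⁻¹' {q.2})) := by
    ext w
    simp only [Set.mem_iUnion, Set.mem_prod, Set.mem_preimage, Set.mem_singleton_iff, hCs,
      Finset.mem_filter, Finset.mem_univ, true_and]
    constructor
    · intro hw
      exact ⟨(phi m w.1, phi m w.2), (mem_Sset_iff m w).mp hw, rfl, rfl⟩
    · rintro ⟨q, hq, h1, h2⟩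
      apply (mem_Sset_iff m w).mpr
      rw [← h1, ← h2] at hq
      exact hq
  rw [hS, measure_biUnion_finset ?_ ?_]
  · have : ∀ q ∈ Cs, (μ.prod μ) ((⇑(phi (p := p) (n := n) m) ⁻¹' {q.1}) ×ˢ
        (⇑(phi (p := p) (n := n) m) ⁻¹' {q.2}))
        = (((Nat.card (Matrix.GeneralLinearGroup (Fin n) (ZMod (p ^ m))) : ℝ≥0∞))⁻¹) ^ 2 := by
      intro q _
      rw [MeasureTheory.Measure.prod_prod, fiber_measure hm μ, fiber_measure hm μ, sq]
    rw [Finset.sum_congr rfl this, Finset.sum_const, nsmul_eq_mul]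
    congr 2
    rw [Nat.card_eq_fintype_card, Fintype.card_subtype]
    congr 1
    apply Finset.filter_congr
    intro x _
    simp [Commute, SemiconjBy]
  · intro q hq q' hq' hne
    apply Set.disjoint_left.mpr
    rintro w ⟨h1, h2⟩ ⟨h1', h2'⟩
    simp only [Set.mem_preimage, Set.mem_singleton_iff] at h1 h2 h1' h2'
    apply hne
    apply Prod.ext
    · rw [← h1, ← h1']
    · rw [← h2, ← h2']
  · intro q _
    exact (fiber_measurable hm q.1).prod (fiber_measurable hm q.2)

lemma norm_pin {N : ℕ} {z : PadicInt p} (h1 : ‖z‖ ≤ (p : ℝ) ^ (-(N : ℤ)))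
    (h2 : ¬ ‖z‖ ≤ (p : ℝ) ^ (-((N + 1 : ℕ) : ℤ))) : ‖z‖ = (p : ℝ) ^ (-(N : ℤ)) := by
  have hz : z ≠ 0 := by
    rintro rfl
    apply h2
    simp only [norm_zero]
    positivity
  rw [PadicInt.norm_le_pow_iff_le_valuation z hz] at h1 h2
  push_neg at h2
  have hval : z.valuation = (N : ℤ) := by push_cast at h2 ⊢; omega
  rw [PadicInt.norm_eq_zpow_neg_valuation hz, hval]

/-- the sup-norm of the commutator matrix -/
noncomputable def rfun (w : Matrix.GeneralLinearGroup (Fin n) (PadicInt p) ×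
    Matrix.GeneralLinearGroup (Fin n) (PadicInt p)) : ℝ :=
  ⨆ i : Fin n, ⨆ j : Fin n,
    ‖((w.1 : Matrix (Fin n) (Fin n) (PadicInt p)) * (w.2 : Matrix (Fin n) (Fin n) (PadicInt p)) -
      (w.2 : Matrix (Fin n) (Fin n) (PadicInt p)) * (w.1 : Matrix (Fin n) (Fin n) (PadicInt p))) i j‖

lemma rfun_eq_of_mem_diff (hn : 1 ≤ n) {N : ℕ}
    {w : Matrix.GeneralLinearGroup (Fin n) (PadicInt p) ×
      Matrix.GeneralLinearGroup (Fin n) (PadicInt p)}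
    (hw : w ∈ Sset p n N) (hw' : w ∉ Sset p n (N + 1)) :
    rfun w = (p : ℝ) ^ (-(N : ℤ)) := by
  haveI : Nonempty (Fin n) := ⟨⟨0, hn⟩⟩
  obtain ⟨i₀, hi₀⟩ : ∃ i, ∃ j, ¬ ‖((w.1 : Matrix (Fin n) (Fin n) (PadicInt p)) *
      (w.2 : Matrix (Fin n) (Fin n) (PadicInt p)) -
      (w.2 : Matrix (Fin n) (Fin n) (PadicInt p)) *
      (w.1 : Matrix (Fin n) (Fin n) (PadicInt p))) i j‖ ≤ (p : ℝ) ^ (-((N + 1 : ℕ) : ℤ)) := by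
    by_contra hcon
    push_neg at hcon
    exact hw' (fun i j => hcon i j)
  obtain ⟨j₀, hj₀⟩ := hi₀
  have hpin := norm_pin (p := p) (hw i₀ j₀) hj₀
  apply le_antisymm
  · apply ciSup_le
    intro i
    apply ciSup_le
    intro j
    exact hw i j
  · have hA : ‖((w.1 : Matrix (Fin n) (Fin n) (PadicInt p)) *
        (w.2 : Matrix (Fin n) (Fin n) (PadicInt p)) -
        (w.2 : Matrix (Fin n) (Fin n) (PadicInt p)) *
        (w.1 : Matrix (Fin n) (Fin n) (PadicInt p))) i₀ j₀‖
        ≤ ⨆ j : Fin n, ‖((w.1 : Matrix (Fin n) (Fin n) (PadicInt p)) *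
        (w.2 : Matrix (Fin n) (Fin n) (PadicInt p)) -
        (w.2 : Matrix (Fin n) (Fin n) (PadicInt p)) *
        (w.1 : Matrix (Fin n) (Fin n) (PadicInt p))) i₀ j‖ :=
      le_ciSup (f := fun j : Fin n => ‖((w.1 : Matrix (Fin n) (Fin n) (PadicInt p)) *
        (w.2 : Matrix (Fin n) (Fin n) (PadicInt p)) -
        (w.2 : Matrix (Fin n) (Fin n) (PadicInt p)) *
        (w.1 : Matrix (Fin n) (Fin n) (PadicInt p))) i₀ j‖)
        (Set.Finite.bddAbove (Set.finite_range _)) j₀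
    have hB : (⨆ j : Fin n, ‖((w.1 : Matrix (Fin n) (Fin n) (PadicInt p)) *
        (w.2 : Matrix (Fin n) (Fin n) (PadicInt p)) -
        (w.2 : Matrix (Fin n) (Fin n) (PadicInt p)) *
        (w.1 : Matrix (Fin n) (Fin n) (PadicInt p))) i₀ j‖) ≤ rfun w :=
      le_ciSup (f := fun i => ⨆ j : Fin n, ‖((w.1 : Matrix (Fin n) (Fin n) (PadicInt p)) *
        (w.2 : Matrix (Fin n) (Fin n) (PadicInt p)) -
        (w.2 : Matrix (Fin n) (Fin n) (PadicInt p)) *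
        (w.1 : Matrix (Fin n) (Fin n) (PadicInt p))) i j‖)
        (Set.Finite.bddAbove (Set.finite_range _)) i₀
    linarith

lemma rfun_eq_zero_of_mem_all (hn : 1 ≤ n)
    {w : Matrix.GeneralLinearGroup (Fin n) (PadicInt p) ×
      Matrix.GeneralLinearGroup (Fin n) (PadicInt p)}
    (hw : ∀ m : ℕ, w ∈ Sset p n m) : rfun w = 0 := by
  haveI : Nonempty (Fin n) := ⟨⟨0, hn⟩⟩
  have hz : ∀ i j, ‖((w.1 : Matrix (Fin n) (Fin n) (PadicInt p)) *
      (w.2 : Matrix (Fin n) (Fin n) (PadicInt p)) -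
      (w.2 : Matrix (Fin n) (Fin n) (PadicInt p)) *
      (w.1 : Matrix (Fin n) (Fin n) (PadicInt p))) i j‖ = 0 := by
    intro i j
    set z := ((w.1 : Matrix (Fin n) (Fin n) (PadicInt p)) *
      (w.2 : Matrix (Fin n) (Fin n) (PadicInt p)) -
      (w.2 : Matrix (Fin n) (Fin n) (PadicInt p)) *
      (w.1 : Matrix (Fin n) (Fin n) (PadicInt p))) i j with hzdef
    by_contra hne
    have hz0 : z ≠ 0 := fun h => hne (by rw [h, norm_zero])
    set N := z.valuation with hN
    have := (PadicInt.norm_le_pow_iff_le_valuation z hz0 (N + 1)).mp (hw (N + 1) i j)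
    rw [hN] at this
    have hvn : (z.valuation : ℤ) = z.valuation := rfl
    omega
  unfold rfun
  have h1 : ∀ i : Fin n, (⨆ j : Fin n, ‖((w.1 : Matrix (Fin n) (Fin n) (PadicInt p)) *
      (w.2 : Matrix (Fin n) (Fin n) (PadicInt p)) -
      (w.2 : Matrix (Fin n) (Fin n) (PadicInt p)) *
      (w.1 : Matrix (Fin n) (Fin n) (PadicInt p))) i j‖) = 0 := by
    intro i
    rw [iSup_congr (fun j => hz i j)]
    exact ciSup_const
  rw [iSup_congr h1]
  exact ciSup_const

lemma pointwise_decomp (hn : 1 ≤ n) {σ : ℝ} (hσ : 0 < σ)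
    (w : Matrix.GeneralLinearGroup (Fin n) (PadicInt p) ×
      Matrix.GeneralLinearGroup (Fin n) (PadicInt p)) :
    rfun w ^ σ = ∑' m : ℕ, (Sset p n m \ Sset p n (m + 1)).indicator
      (fun _ => ((p : ℝ) ^ (-σ)) ^ m) w := by
  have hp1 : (1 : ℝ) < (p : ℝ) := by exact_mod_cast (Fact.out : p.Prime).one_lt
  have hp0 : (0 : ℝ) < (p : ℝ) := lt_trans one_pos hp1
  by_cases hall : ∀ m, w ∈ Sset p n m
  · rw [rfun_eq_zero_of_mem_all hn hall, Real.zero_rpow hσ.ne']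
    symm
    have hzero : ∀ m : ℕ, (Sset p n m \ Sset p n (m + 1)).indicator
        (fun _ => ((p : ℝ) ^ (-σ)) ^ m) w = 0 := by
      intro m
      apply Set.indicator_of_notMem
      intro hmem
      exact hmem.2 (hall (m + 1))
    rw [tsum_congr hzero]
    exact tsum_zero
  · push_neg at hall
    have h0 : w ∈ Sset p n 0 := by rw [Sset_zero]; trivial
    have hfind : ∃ m, w ∉ Sset p n m := hall
    classical
    obtain ⟨N, hNspec, hNmin⟩ : ∃ N, w ∉ Sset p n N ∧ ∀ k, k < N → w ∈ Sset p n k :=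
      ⟨Nat.find hfind, Nat.find_spec hfind, fun k hk => by
        by_contra hcon
        exact absurd (Nat.find_le hcon) (not_le.mpr hk)⟩
    have hN0 : N ≠ 0 := fun h => hNspec (h ▸ h0)
    obtain ⟨Q, rfl⟩ : ∃ Q, N = Q + 1 := ⟨N - 1, by omega⟩
    have hwM : w ∈ Sset p n Q := hNmin Q (by omega)
    have hwdiff : w ∈ Sset p n Q \ Sset p n (Q + 1) := ⟨hwM, hNspec⟩
    rw [tsum_eq_single Q ?_]
    · rw [Set.indicator_of_mem hwdiff, rfun_eq_of_mem_diff hn hwM hNspec]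
      have e1 : ((p : ℝ) ^ (-(Q : ℤ))) = (p : ℝ) ^ ((-(Q : ℤ) : ℤ) : ℝ) :=
        (Real.rpow_intCast _ _).symm
      rw [e1, ← Real.rpow_natCast ((p : ℝ) ^ (-σ)) Q, ← Real.rpow_mul hp0.le,
        ← Real.rpow_mul hp0.le]
      congr 1
      push_cast
      ring
    · intro m hm
      apply Set.indicator_of_notMem
      rcases lt_or_gt_of_ne hm with hlt | hgt
      · intro hmem
        exact hmem.2 (Sset_antitone (by omega) hwM)
      · intro hmem
        exact hNspec (Sset_antitone (by omega) hmem.1)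

lemma integral_decomp (hn : 1 ≤ n) {σ : ℝ} (hσ : 0 < σ)
    (μ : Measure (Matrix.GeneralLinearGroup (Fin n) (PadicInt p)))
    [μ.IsMulLeftInvariant] [MeasureTheory.IsProbabilityMeasure μ] :
    ∫ w, rfun (p := p) (n := n) w ^ σ ∂(μ.prod μ)
      = ∑' m : ℕ, ((p : ℝ) ^ (-σ)) ^ m *
        ((((μ.prod μ) (Sset p n m)).toReal) - (((μ.prod μ) (Sset p n (m + 1))).toReal)) := by
  have hp1 : (1 : ℝ) < (p : ℝ) := by exact_mod_cast (Fact.out : p.Prime).one_lt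
  have hp0 : (0 : ℝ) < (p : ℝ) := lt_trans one_pos hp1
  have hu0 : (0 : ℝ) ≤ (p : ℝ) ^ (-σ) := Real.rpow_nonneg hp0.le _
  have hu1 : (p : ℝ) ^ (-σ) < 1 :=
    Real.rpow_lt_one_of_one_lt_of_neg hp1 (neg_lt_zero.mpr hσ)
  have hrw : (fun w => rfun (p := p) (n := n) w ^ σ)
      = fun w => ∑' m : ℕ, (Sset p n m \ Sset p n (m + 1)).indicator
        (fun _ => ((p : ℝ) ^ (-σ)) ^ m) w := funext (fun w => pointwise_decomp hn hσ w)
  rw [hrw]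
  have hAm : ∀ m : ℕ, MeasurableSet (Sset p n m \ Sset p n (m + 1)) :=
    fun m => (Sset_measurable m).diff (Sset_measurable (m + 1))
  rw [MeasureTheory.integral_tsum]
  · apply tsum_congr
    intro m
    rw [MeasureTheory.integral_indicator_const _ (hAm m), smul_eq_mul, mul_comm]
    congr 1
    rw [measureReal_def]
    rw [measure_diff (Sset_antitone (by omega)) (Sset_measurable (m + 1)).nullMeasurableSet
      (MeasureTheory.measure_ne_top _ _)]
    rw [ENNReal.toReal_sub_of_le (measure_mono (Sset_antitone (by omega)))
      (MeasureTheory.measure_ne_top _ _)]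
  · exact fun m => (measurable_const.indicator (hAm m)).aestronglyMeasurable
  · apply ne_top_of_le_ne_top (b := ∑' m : ℕ, (ENNReal.ofReal ((p : ℝ) ^ (-σ))) ^ m)
    · rw [ENNReal.tsum_geometric]
      intro htop
      rw [ENNReal.inv_eq_top, tsub_eq_zero_iff_le] at htop
      exact absurd htop (not_le.mpr (ENNReal.ofReal_lt_one.mpr hu1))
    · apply ENNReal.tsum_le_tsum
      intro m
      calc ∫⁻ w, ‖(Sset p n m \ Sset p n (m + 1)).indicator
            (fun _ => ((p : ℝ) ^ (-σ)) ^ m) w‖₊ ∂(μ.prod μ)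
          = ∫⁻ w, (Sset p n m \ Sset p n (m + 1)).indicator
            (fun _ => ((‖((p : ℝ) ^ (-σ)) ^ m‖₊ : ℝ≥0∞))) w ∂(μ.prod μ) := by
            apply MeasureTheory.lintegral_congr
            intro w
            by_cases hw : w ∈ Sset p n m \ Sset p n (m + 1)
            · simp [Set.indicator_of_mem hw]
            · simp [Set.indicator_of_notMem hw]
        _ = (‖((p : ℝ) ^ (-σ)) ^ m‖₊ : ℝ≥0∞) * (μ.prod μ) (Sset p n m \ Sset p n (m + 1)) :=
            MeasureTheory.lintegral_indicator_const (hAm m) _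
        _ ≤ (‖((p : ℝ) ^ (-σ)) ^ m‖₊ : ℝ≥0∞) * 1 := mul_le_mul_right prob_le_one _
        _ = (ENNReal.ofReal ((p : ℝ) ^ (-σ))) ^ m := by
            rw [mul_one, ← enorm_eq_nnnorm, Real.enorm_eq_ofReal (pow_nonneg hu0 m), ENNReal.ofReal_pow hu0]

lemma c_formula {d : ℕ} (hd : d = n ^ 2)
    (μ : Measure (Matrix.GeneralLinearGroup (Fin n) (PadicInt p)))
    [μ.IsMulLeftInvariant] [MeasureTheory.IsProbabilityMeasure μ]
    {s : ℝ} {m : ℕ} (hm : m ≠ 0) :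
    (Nat.card (ConjClasses (Matrix.GeneralLinearGroup (Fin n) (ZMod (p ^ m)))) : ℝ)
        * (p : ℝ) ^ (-((m : ℝ) * s))
      = ((Nat.card (Matrix.GeneralLinearGroup (Fin n) (ZMod p)) : ℝ) / (p : ℝ) ^ d)
        * ((p : ℝ) ^ (-(s - (d : ℝ)))) ^ m * (((μ.prod μ) (Sset p n m)).toReal) := by
  classical
  haveI : NeZero (p ^ m) := ⟨pow_ne_zero _ (Fact.out : p.Prime).ne_zero⟩
  have hp1 : (1 : ℝ) < (p : ℝ) := by exact_mod_cast (Fact.out : p.Prime).one_lt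
  have hp0 : (0 : ℝ) < (p : ℝ) := lt_trans one_pos hp1
  set Gm := Matrix.GeneralLinearGroup (Fin n) (ZMod (p ^ m)) with hGm
  set cc := Nat.card (ConjClasses Gm) with hcc
  set gm := Nat.card Gm with hgm
  set N1 := Nat.card (Matrix.GeneralLinearGroup (Fin n) (ZMod p)) with hN1
  -- measure of S m
  have hmeas : (((μ.prod μ) (Sset p n m)).toReal) = ((cc * gm : ℕ) : ℝ) * (((gm : ℝ))⁻¹) ^ 2 := by
    rw [Sset_measure hm μ, ← card_comm_eq_card_conjClasses_mul_card]
    rw [ENNReal.toReal_mul, ENNReal.toReal_pow, ENNReal.toReal_inv, ENNReal.toReal_natCast,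
      ENNReal.toReal_natCast]
  have hgm_card : gm = N1 * p ^ ((m - 1) * n ^ 2) := card_GL_zmod p hm n
  have hN1pos : (0 : ℕ) < N1 := Nat.card_pos
  have hgm_pos : (0 : ℕ) < gm := Nat.card_pos
  have hF : (((μ.prod μ) (Sset p n m)).toReal) = (cc : ℝ) / (gm : ℝ) := by
    rw [hmeas]
    push_cast
    field_simp
  rw [hF]
  -- power arithmetic
  have hu : ((p : ℝ) ^ (-(s - (d : ℝ)))) ^ m = (p : ℝ) ^ ((-(s - (d : ℝ))) * m) := by
    rw [← Real.rpow_natCast ((p : ℝ) ^ (-(s - (d : ℝ)))) m, ← Real.rpow_mul hp0.le]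
  have hpd : ((p : ℝ) ^ ((m - 1) * n ^ 2 : ℕ)) = (p : ℝ) ^ (((m - 1) * n ^ 2 : ℕ) : ℝ) :=
    (Real.rpow_natCast _ _).symm
  have hgm_real : (gm : ℝ) = (N1 : ℝ) * (p : ℝ) ^ ((m - 1) * n ^ 2 : ℕ) := by
    rw [hgm_card]; push_cast; ring
  rw [hgm_real, hu]
  have hpdr : ((p : ℝ) ^ d) = (p : ℝ) ^ ((d : ℕ) : ℝ) := (Real.rpow_natCast _ _).symm
  rw [hpd, hpdr]
  have hN1ne : (N1 : ℝ) ≠ 0 := by exact_mod_cast hN1pos.ne'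
  have hrne : ∀ x : ℝ, (p : ℝ) ^ x ≠ 0 := fun x => (Real.rpow_pos_of_pos hp0 x).ne'
  have hexp : (p : ℝ) ^ (-((m : ℝ) * s)) = (p : ℝ) ^ ((-(s - (d : ℝ))) * m)
      * ((p : ℝ) ^ (((d : ℕ) : ℝ)))⁻¹ * ((p : ℝ) ^ ((((m - 1) * n ^ 2 : ℕ)) : ℝ))⁻¹ := by
    rw [← Real.rpow_neg hp0.le, ← Real.rpow_neg hp0.le, ← Real.rpow_add hp0,
      ← Real.rpow_add hp0]
    congr 1
    have hm1 : ((m - 1 : ℕ) : ℝ) = (m : ℝ) - 1 := by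
      have : (1 : ℕ) ≤ m := Nat.one_le_iff_ne_zero.mpr hm
      push_cast [this]
      ring
    rw [hd] at *
    push_cast [hm1]
    ring
  rw [hexp]
  field_simp

lemma card_conj_one : Nat.card (ConjClasses
    (Matrix.GeneralLinearGroup (Fin n) (ZMod (p ^ 0)))) = 1 := by
  haveI h0 : Subsingleton (ZMod (p ^ 0)) := by rw [pow_zero]; infer_instance
  haveI h1 : Subsingleton (Matrix (Fin n) (Fin n) (ZMod (p ^ 0))) :=
    (inferInstance : Subsingleton (Fin n → Fin n → ZMod (p ^ 0)))
  haveI h2 : Subsingleton (Matrix.GeneralLinearGroup (Fin n) (ZMod (p ^ 0))) :=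
    ⟨fun a b => Units.ext (Subsingleton.elim _ _)⟩
  haveI h3 : Subsingleton (ConjClasses (Matrix.GeneralLinearGroup (Fin n) (ZMod (p ^ 0)))) := by
    constructor
    intro a b
    obtain ⟨x, rfl⟩ := ConjClasses.mk_surjective a
    obtain ⟨y, rfl⟩ := ConjClasses.mk_surjective b
    rw [Subsingleton.elim x y]
  rw [Nat.card_eq_one_iff_unique]
  exact ⟨h3, ⟨ConjClasses.mk 1⟩⟩

end Measure

lemma series_algebra {u kk : ℝ} (hupos : 0 < u) (hu1 : u < 1) (hkk : 0 ≤ kk)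
    (F : ℕ → ℝ) (hF0 : F 0 = 1) (hFnn : ∀ m, 0 ≤ F m) (hFle : ∀ m, F m ≤ 1)
    (g : ℕ → ℝ) (hg0 : g 0 = 1) (hg : ∀ m : ℕ, g (m + 1) = kk * u ^ (m + 1) * F (m + 1))
    (Zval : ℝ) (hZval : Zval = ∑' m : ℕ, u ^ m * (F m - F (m + 1))) :
    Summable g ∧ (∑' m : ℕ, g m) - 1 = kk * (Zval - 1) / (1 - u⁻¹) := by
  have hu0 : 0 ≤ u := hupos.le
  have hune : u ≠ 0 := hupos.ne'
  have hgeo : Summable (fun m : ℕ => u ^ m) := summable_geometric_of_lt_one hu0 hu1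
  have hsummand : ∀ (G : ℕ → ℝ), (∀ m, 0 ≤ G m) → (∀ m, G m ≤ 1) →
      Summable (fun m : ℕ => u ^ m * G m) := by
    intro G h1 h2
    apply Summable.of_nonneg_of_le (fun m => mul_nonneg (pow_nonneg hu0 _) (h1 _))
      (fun m => mul_le_of_le_one_right (pow_nonneg hu0 _) (h2 _)) hgeo
  have hA : Summable (fun m : ℕ => u ^ m * F m) := hsummand F hFnn hFle
  have hB : Summable (fun m : ℕ => u ^ m * F (m + 1)) :=
    hsummand (fun m => F (m + 1)) (fun m => hFnn _) (fun m => hFle _)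
  have hT : Summable (fun m : ℕ => u ^ (m + 1) * F (m + 1)) := by
    have := hB.mul_left u
    apply this.congr
    intro m
    rw [pow_succ]
    ring
  set T := ∑' m : ℕ, u ^ (m + 1) * F (m + 1) with hTdef
  -- sum of g
  have hgsucc : Summable (fun m : ℕ => g (m + 1)) := by
    apply (hT.mul_left kk).congr
    intro m
    rw [hg m]
    ring
  have hgsum : Summable g := (_root_.summable_nat_add_iff 1).mp hgsucc
  refine ⟨hgsum, ?_⟩
  have htsumg : (∑' m : ℕ, g m) = 1 + kk * T := by
    rw [Summable.tsum_eq_zero_add hgsum, hg0]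
    congr 1
    calc (∑' m : ℕ, g (m + 1)) = ∑' m : ℕ, kk * (u ^ (m + 1) * F (m + 1)) := by
          apply tsum_congr
          intro m
          rw [hg m]
          ring
      _ = kk * T := tsum_mul_left
  have hAval : (∑' m : ℕ, u ^ m * F m) = 1 + T := by
    rw [Summable.tsum_eq_zero_add hA]
    simp [hF0, hTdef]
  have hBval : (∑' m : ℕ, u ^ m * F (m + 1)) = u⁻¹ * T := by
    calc (∑' m : ℕ, u ^ m * F (m + 1)) = ∑' m : ℕ, u⁻¹ * (u ^ (m + 1) * F (m + 1)) := by
          apply tsum_congr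
          intro m
          rw [pow_succ]
          field_simp
      _ = u⁻¹ * T := tsum_mul_left
  have hZv : Zval = (1 + T) - u⁻¹ * T := by
    rw [hZval, ← hAval, ← hBval, ← Summable.tsum_sub hA hB]
    apply tsum_congr
    intro m
    ring
  have hden : 1 - u⁻¹ ≠ 0 := by
    have : 1 < u⁻¹ := (one_lt_inv_iff₀.mpr ⟨hupos, hu1⟩)
    linarith
  have hfact : (1 + T - u⁻¹ * T) - 1 = (1 - u⁻¹) * T := by ring
  rw [htsumg, hZv, hfact, mul_comm (1 - u⁻¹) T, ← mul_assoc, mul_div_assoc, div_self hden,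
    mul_one]
  ring

end GLZeta

/-- The conjugacy class zeta function of `GLₙ(ℤ_p)` in terms of the commutator integral:
for `s > d = n²`, `∑ c_m p^{-ms} - 1 = k (Z(s-d) - 1)/(1 - p^{s-d})`
where `k = |GLₙ(𝔽_p)|/p^d`. -/
theorem GL_padic_conjugacy_zeta (p n : ℕ) [Fact p.Prime] (hn : 1 ≤ n)
    (d : ℕ) (hd : d = n ^ 2)
    (μ : Measure (Matrix.GeneralLinearGroup (Fin n) (PadicInt p)))
    [μ.IsHaarMeasure] [IsProbabilityMeasure μ]
    (c : ℕ → ℕ)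
    (hc : ∀ m, c m = Nat.card (ConjClasses (Matrix.GeneralLinearGroup (Fin n) (ZMod (p ^ m)))))
    (Z : ℝ → ℝ)
    (hZ : ∀ σ : ℝ, Z σ =
      ∫ w : Matrix.GeneralLinearGroup (Fin n) (PadicInt p) ×
            Matrix.GeneralLinearGroup (Fin n) (PadicInt p),
        (⨆ i : Fin n, ⨆ j : Fin n,
          ‖((w.1 : Matrix (Fin n) (Fin n) (PadicInt p)) * (w.2 : Matrix (Fin n) (Fin n) (PadicInt p)) -
            (w.2 : Matrix (Fin n) (Fin n) (PadicInt p)) * (w.1 : Matrix (Fin n) (Fin n) (PadicInt p))) i j‖) ^ σ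
        ∂(μ.prod μ))
    (k : ℝ)
    (hk : k = (Nat.card (Matrix.GeneralLinearGroup (Fin n) (ZMod p)) : ℝ) / (p : ℝ) ^ d)
    (s : ℝ) (hs : (d : ℝ) < s) :
    Summable (fun m : ℕ => (c m : ℝ) * (p : ℝ) ^ (-(m * s))) ∧
    (∑' m : ℕ, (c m : ℝ) * (p : ℝ) ^ (-(m * s))) - 1 =
      k * (Z (s - d) - 1) / (1 - (p : ℝ) ^ (s - (d : ℝ))) := by
  have hp1 : (1 : ℝ) < (p : ℝ) := by exact_mod_cast (Fact.out : p.Prime).one_lt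
  have hp0 : (0 : ℝ) < (p : ℝ) := lt_trans one_pos hp1
  have hσ : (0 : ℝ) < s - (d : ℝ) := sub_pos.mpr hs
  set u : ℝ := (p : ℝ) ^ (-(s - (d : ℝ))) with hudef
  have hupos : 0 < u := Real.rpow_pos_of_pos hp0 _
  have hu1 : u < 1 := Real.rpow_lt_one_of_one_lt_of_neg hp1 (neg_lt_zero.mpr hσ)
  have hkk : 0 ≤ k := by rw [hk]; positivity
  set F : ℕ → ℝ := fun m => ((μ.prod μ) (GLZeta.Sset p n m)).toReal with hFdef
  have hF0 : F 0 = 1 := by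
    show ((μ.prod μ) (GLZeta.Sset p n 0)).toReal = 1
    rw [GLZeta.Sset_zero]
    simp
  have hFnn : ∀ m, 0 ≤ F m := fun m => ENNReal.toReal_nonneg
  have hFle : ∀ m, F m ≤ 1 := by
    intro m
    show ((μ.prod μ) (GLZeta.Sset p n m)).toReal ≤ 1
    have h := prob_le_one (μ := μ.prod μ) (s := GLZeta.Sset p n m)
    have h2 := ENNReal.toReal_mono ENNReal.one_ne_top h
    simpa using h2
  have hg0 : (c 0 : ℝ) * (p : ℝ) ^ (-((0 : ℕ) * s)) = 1 := by
    rw [hc 0, GLZeta.card_conj_one]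
    norm_num
  have hg : ∀ m : ℕ, (c (m + 1) : ℝ) * (p : ℝ) ^ (-(((m + 1 : ℕ) : ℝ) * s))
      = k * u ^ (m + 1) * F (m + 1) := by
    intro m
    rw [hc (m + 1), hk]
    exact GLZeta.c_formula hd μ (Nat.succ_ne_zero m)
  have hZval : Z (s - (d : ℝ)) = ∑' m : ℕ, u ^ m * (F m - F (m + 1)) := by
    rw [hZ (s - (d : ℝ))]
    show (∫ w, GLZeta.rfun (p := p) (n := n) w ^ (s - (d : ℝ)) ∂(μ.prod μ)) = _
    rw [GLZeta.integral_decomp hn hσ μ]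
  obtain ⟨hsum, heq⟩ := GLZeta.series_algebra hupos hu1 hkk F hF0 hFnn hFle
    (fun m : ℕ => (c m : ℝ) * (p : ℝ) ^ (-((m : ℝ) * s))) hg0 hg (Z (s - (d : ℝ))) hZval
  have hinv : u⁻¹ = (p : ℝ) ^ (s - (d : ℝ)) := by
    rw [hudef, Real.rpow_neg hp0.le, inv_inv]
  refine ⟨hsum, ?_⟩
  rw [heq, hinv]
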